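/- Let ρ and σ be density matrices and let p ∈ (0,1) with q = 1 − p. Then ‖pρ − qσ‖₁² ≤ 1 − 4pq + 4pq · d_B²(ρ,σ), where d_B²(ρ,σ) = 2(1 − ‖√ρ√σ‖₁) is the squared Bures distance. -/

import Mathlib

open scoped ComplexOrder Kronecker
open Matrix

/-- The square root of a positive semidefinite matrix, as `Matrix.PosSemidef.sqrt` was defined
in Mathlib (December 2024); it has since been removed from Mathlib. -/
noncomputable def Matrix.PosSemidef.sqrt {n 𝕜 : Type*} [Fintype n] [DecidableEq n] [RCLike 𝕜]
    {A : Matrix n n 𝕜} (hA : A.PosSemidef) : Matrix n n 𝕜 :=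
  hA.1.eigenvectorUnitary.1 * diagonal ((↑) ∘ (√·) ∘ hA.1.eigenvalues) *
    (star hA.1.eigenvectorUnitary : Matrix n n 𝕜)

section sqrtPort
open scoped MatrixOrder

lemma Matrix.PosSemidef.sqrt_eq_cfc' {n : Type*} [Fintype n] [DecidableEq n]
    {A : Matrix n n ℂ} (hA : A.PosSemidef) : hA.sqrt = CFC.sqrt A := by
  rw [CFC.sqrt_eq_cfc, cfc_nnreal_eq_real _ A hA.nonneg, hA.1.cfc_eq]
  simp only [IsHermitian.cfc, Matrix.PosSemidef.sqrt, Unitary.conjStarAlgAut_apply]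
  congr 2
  ext j
  simp [diagonal_apply, max_eq_left, hA.eigenvalues_nonneg]

lemma Matrix.PosSemidef.posSemidef_sqrt {n : Type*} [Fintype n] [DecidableEq n]
    {A : Matrix n n ℂ} (hA : A.PosSemidef) : hA.sqrt.PosSemidef := by
  rw [hA.sqrt_eq_cfc']
  exact nonneg_iff_posSemidef.mp (CFC.sqrt_nonneg A)

lemma Matrix.PosSemidef.sqrt_mul_self {n : Type*} [Fintype n] [DecidableEq n]
    {A : Matrix n n ℂ} (hA : A.PosSemidef) : hA.sqrt * hA.sqrt = A := by
  rw [hA.sqrt_eq_cfc']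
  exact CFC.sqrt_mul_sqrt_self A hA.nonneg

lemma Matrix.PosSemidef.eq_sqrt_of_sq_eq {n : Type*} [Fintype n] [DecidableEq n]
    {C : Matrix n n ℂ} (hC : C.PosSemidef) {B : Matrix n n ℂ} (hB : B.PosSemidef)
    (h : C ^ 2 = B) : C = hB.sqrt := by
  rw [hB.sqrt_eq_cfc']
  exact (CFC.sqrt_unique (by rw [← sq]; exact h) hC.nonneg).symm

end sqrtPort

noncomputable def opNorm {m n : Type*} [Fintype m] [Fintype n] [DecidableEq n]
    (A : Matrix m n ℂ) : ℝ :=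
  ‖(Matrix.toEuclideanLin A).toContinuousLinearMap‖

noncomputable def traceNorm {n : Type*} [Fintype n] [DecidableEq n] (A : Matrix n n ℂ) : ℝ :=
  ((Matrix.posSemidef_conjTranspose_mul_self A).sqrt).trace.re

noncomputable def frobNorm {n : Type*} [Fintype n] (A : Matrix n n ℂ) : ℝ :=
  Real.sqrt ((Aᴴ * A).trace.re)

lemma bessel_dot {m : Type*} [Fintype m] {ι : Type*} [DecidableEq ι] (J : Finset ι) (z : ι → m → ℂ)
    (hz : ∀ j ∈ J, ∀ k ∈ J, star (z j) ⬝ᵥ z k = if j = k then 1 else 0)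
    (u : m → ℂ) :
    ∑ j ∈ J, ‖star (z j) ⬝ᵥ u‖ ^ 2 ≤ (star u ⬝ᵥ u).re := by
  classical
  set v : {x // x ∈ J} → EuclideanSpace ℂ m := fun j => (WithLp.equiv 2 _).symm (z j) with hv
  have hinner : ∀ (a b : m → ℂ),
      (inner ℂ ((WithLp.equiv 2 (m → ℂ)).symm a) ((WithLp.equiv 2 (m → ℂ)).symm b) : ℂ)
        = star a ⬝ᵥ b := by
    intro a b
    simp [PiLp.inner_apply, dotProduct, mul_comm]
  have hov : Orthonormal ℂ v := by
    rw [orthonormal_iff_ite]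
    intro i j
    rw [hv]
    simp only
    rw [hinner, hz i.1 i.2 j.1 j.2]
    exact if_congr Subtype.ext_iff.symm rfl rfl
  have hb := hov.sum_inner_products_le (s := Finset.univ) ((WithLp.equiv 2 (m → ℂ)).symm u)
  have hn : ‖(WithLp.equiv 2 (m → ℂ)).symm u‖ ^ 2 = (star u ⬝ᵥ u).re := by
    rw [← inner_self_eq_norm_sq (𝕜 := ℂ), hinner]
    rfl
  rw [hn] at hb
  refine le_trans (le_of_eq ?_) hb
  rw [← Finset.sum_coe_sort J]
  refine Finset.sum_congr rfl fun j _ => ?_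
  rw [hv]
  simp only
  rw [hinner]

lemma trace_herm_eq_sum_eig {n : Type*} [Fintype n] [DecidableEq n] {M : Matrix n n ℂ}
    (hM : M.IsHermitian) : M.trace = ∑ i, (hM.eigenvalues i : ℂ) := by
  have hVV' : star (IsHermitian.eigenvectorUnitary hM : Matrix n n ℂ) *
      (IsHermitian.eigenvectorUnitary hM : Matrix n n ℂ) = 1 :=
    (Matrix.mem_unitaryGroup_iff').mp (IsHermitian.eigenvectorUnitary hM).2
  conv_lhs => rw [hM.spectral_theorem]
  rw [Unitary.conjStarAlgAut_apply, Matrix.trace_mul_cycle, hVV', Matrix.one_mul, Matrix.trace_diagonal]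
  rfl

lemma dot_sum {n : Type*} [Fintype n] {ι : Type*} (s : Finset ι) (v : n → ℂ) (f : ι → n → ℂ) :
    v ⬝ᵥ (∑ i ∈ s, f i) = ∑ i ∈ s, v ⬝ᵥ f i := by
  simp only [dotProduct, Finset.sum_apply, Finset.mul_sum]
  exact Finset.sum_comm

lemma mulVec_sum' {n m : Type*} [Fintype n] [Fintype m] {ι : Type*} (s : Finset ι)
    (A : Matrix m n ℂ) (f : ι → n → ℂ) :
    A *ᵥ (∑ i ∈ s, f i) = ∑ i ∈ s, A *ᵥ f i := by
  funext k
  simp only [Matrix.mulVec, Finset.sum_apply]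
  exact dot_sum s _ f

lemma unitary_expand {n : Type*} [Fintype n] [DecidableEq n] (V : Matrix n n ℂ)
    (hV : V * star V = 1) (u : n → ℂ) :
    ∑ i, ((star (fun k => V k i)) ⬝ᵥ u) • (fun k => V k i) = u := by
  funext k
  simp only [Finset.sum_apply, Pi.smul_apply, smul_eq_mul, dotProduct, Pi.star_apply,
    Finset.sum_mul]
  rw [Finset.sum_comm]
  have : ∀ l, ∑ i, star (V l i) * u l * V k i = (V * star V) k l * u l := by
    intro l
    rw [Matrix.mul_apply]
    rw [Finset.sum_mul]
    refine Finset.sum_congr rfl fun i _ => ?_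
    simp [Matrix.star_apply]
    ring
  rw [Finset.sum_congr rfl fun l _ => this l, hV]
  simp [Matrix.one_apply]

/-- classical fidelity bound -/
lemma scalar_cs {d : ℕ} (p q : ℝ) (hp : 0 < p) (hq : 0 < q) (hpq : p + q = 1)
    (r s : Fin d → ℝ) (hr : ∀ i, 0 ≤ r i) (hs : ∀ i, 0 ≤ s i)
    (hr1 : ∑ i, r i = 1) (hs1 : ∑ i, s i = 1) :
    (∑ i, |p * r i - q * s i|) ^ 2 ≤ 1 - 4 * p * q * (∑ i, Real.sqrt (r i * s i)) ^ 2 := by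
  set x : Fin d → ℝ := fun i => p * r i + q * s i with hx
  set y : Fin d → ℝ := fun i => 2 * (Real.sqrt p * Real.sqrt q * Real.sqrt (r i) * Real.sqrt (s i)) with hy
  have hxy1 : ∀ i, x i - y i = (Real.sqrt (p * r i) - Real.sqrt (q * s i)) ^ 2 := by
    intro i
    rw [sub_sq, Real.sq_sqrt (mul_nonneg hp.le (hr i)), Real.sq_sqrt (mul_nonneg hq.le (hs i)),
      Real.sqrt_mul hp.le, Real.sqrt_mul hq.le]
    simp only [hx, hy]; ring
  have hxy2 : ∀ i, x i + y i = (Real.sqrt (p * r i) + Real.sqrt (q * s i)) ^ 2 := by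
    intro i
    rw [add_sq, Real.sq_sqrt (mul_nonneg hp.le (hr i)), Real.sq_sqrt (mul_nonneg hq.le (hs i)),
      Real.sqrt_mul hp.le, Real.sqrt_mul hq.le]
    simp only [hx, hy]; ring
  have hxy1' : ∀ i, 0 ≤ x i - y i := fun i => by rw [hxy1]; positivity
  have hxy2' : ∀ i, 0 ≤ x i + y i := fun i => by rw [hxy2]; positivity
  have habs : ∀ i, |p * r i - q * s i| = Real.sqrt (x i - y i) * Real.sqrt (x i + y i) := by
    intro i
    rw [← Real.sqrt_mul (hxy1' i), ← Real.sqrt_mul_self_eq_abs]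
    congr 1
    have h1 : Real.sqrt (p * r i) ^ 2 = p * r i := Real.sq_sqrt (mul_nonneg hp.le (hr i))
    have h2 : Real.sqrt (q * s i) ^ 2 = q * s i := Real.sq_sqrt (mul_nonneg hq.le (hs i))
    rw [hxy1, hxy2]; nlinarith [h1, h2]
  have hcs := Real.sum_sqrt_mul_sqrt_le (f := fun i => x i - y i) (g := fun i => x i + y i)
      Finset.univ hxy1' hxy2'
  have hL : (∑ i, |p * r i - q * s i|) ≤
      Real.sqrt (∑ i, (x i - y i)) * Real.sqrt (∑ i, (x i + y i)) := by
    calc (∑ i, |p * r i - q * s i|) = ∑ i, Real.sqrt (x i - y i) * Real.sqrt (x i + y i) :=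
          Finset.sum_congr rfl fun i _ => habs i
      _ ≤ _ := hcs
  have hLnn : 0 ≤ ∑ i, |p * r i - q * s i| := Finset.sum_nonneg fun i _ => abs_nonneg _
  have hsq : (∑ i, |p * r i - q * s i|) ^ 2 ≤ (∑ i, (x i - y i)) * (∑ i, (x i + y i)) := by
    have := pow_le_pow_left₀ hLnn hL 2
    refine this.trans (le_of_eq ?_)
    rw [mul_pow, Real.sq_sqrt (Finset.sum_nonneg fun i _ => hxy1' i),
      Real.sq_sqrt (Finset.sum_nonneg fun i _ => hxy2' i)]
  have hxsum : (∑ i, x i) = 1 := by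
    simp only [hx, Finset.sum_add_distrib, ← Finset.mul_sum, hr1, hs1]
    linarith
  have hysum : (∑ i, y i) = 2 * Real.sqrt p * Real.sqrt q * (∑ i, Real.sqrt (r i * s i)) := by
    rw [Finset.mul_sum]
    refine Finset.sum_congr rfl fun i _ => ?_
    rw [Real.sqrt_mul (hr i)]
    simp only [hy]; ring
  have hsum1 : (∑ i, (x i - y i)) = 1 - ∑ i, y i := by
    rw [Finset.sum_sub_distrib, hxsum]
  have hsum2 : (∑ i, (x i + y i)) = 1 + ∑ i, y i := by
    rw [Finset.sum_add_distrib, hxsum]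
  rw [hsum1, hsum2] at hsq
  have hps : Real.sqrt p ^ 2 = p := Real.sq_sqrt hp.le
  have hqs : Real.sqrt q ^ 2 = q := Real.sq_sqrt hq.le
  calc (∑ i, |p * r i - q * s i|) ^ 2 ≤ (1 - ∑ i, y i) * (1 + ∑ i, y i) := hsq
    _ = 1 - (∑ i, y i) ^ 2 := by ring
    _ = 1 - 4 * p * q * (∑ i, Real.sqrt (r i * s i)) ^ 2 := by
        rw [hysum]
        have : (2 * Real.sqrt p * Real.sqrt q * (∑ i, Real.sqrt (r i * s i))) ^ 2
            = 4 * p * q * (∑ i, Real.sqrt (r i * s i)) ^ 2 := by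
          rw [mul_pow, mul_pow, mul_pow, hps, hqs]; ring
        rw [this]

lemma traceNorm_hermitian {n : Type*} [Fintype n] [DecidableEq n] {M : Matrix n n ℂ}
    (hM : M.IsHermitian) : traceNorm M = ∑ i, |hM.eigenvalues i| := by
  set V : Matrix n n ℂ := (IsHermitian.eigenvectorUnitary hM : Matrix n n ℂ) with hVdef
  have hVV : V * star V = 1 := (Matrix.mem_unitaryGroup_iff).mp (IsHermitian.eigenvectorUnitary hM).2
  have hVV' : star V * V = 1 := (Matrix.mem_unitaryGroup_iff').mp (IsHermitian.eigenvectorUnitary hM).2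
  have hconj : ∀ X Y : Matrix n n ℂ, (V * X * star V) * (V * Y * star V) = V * (X * Y) * star V := by
    intro X Y
    calc (V * X * star V) * (V * Y * star V) = V * (X * ((star V * V) * Y)) * star V := by
          simp only [Matrix.mul_assoc]
      _ = _ := by rw [hVV', Matrix.one_mul, Matrix.mul_assoc]
  set D : Matrix n n ℂ := diagonal (fun i => ((|hM.eigenvalues i| : ℝ) : ℂ)) with hDdef
  set C : Matrix n n ℂ := V * D * star V with hCdef
  have hC : C.PosSemidef := by
    apply PosSemidef.mul_mul_conjTranspose_same ?_ V
    refine posSemidef_diagonal_iff.mpr fun i => ?_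
    rw [Complex.zero_le_real]
    exact abs_nonneg _
  have hspec := hM.spectral_theorem
  rw [Unitary.conjStarAlgAut_apply, ← hVdef] at hspec
  have hdd : D * D = diagonal (RCLike.ofReal ∘ hM.eigenvalues) *
      diagonal (RCLike.ofReal ∘ hM.eigenvalues) := by
    rw [hDdef, diagonal_mul_diagonal, diagonal_mul_diagonal]
    refine congrArg Matrix.diagonal (funext fun i => ?_)
    show ((|hM.eigenvalues i| : ℝ) : ℂ) * ((|hM.eigenvalues i| : ℝ) : ℂ)
      = ((hM.eigenvalues i : ℝ) : ℂ) * ((hM.eigenvalues i : ℝ) : ℂ)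
    rw [← Complex.ofReal_mul, ← Complex.ofReal_mul, abs_mul_abs_self]
  have hC2 : C ^ 2 = Mᴴ * M := by
    rw [hM.eq, pow_two, hCdef, hconj]
    conv_rhs => rw [hspec]
    rw [hconj, hdd]
  have hsqrt : C = (Matrix.posSemidef_conjTranspose_mul_self M).sqrt :=
    PosSemidef.eq_sqrt_of_sq_eq hC _ hC2
  rw [traceNorm, ← hsqrt, hCdef]
  rw [Matrix.trace_mul_cycle, hVV', Matrix.one_mul]
  rw [Matrix.trace_diagonal]
  rw [Complex.re_sum]
  norm_num

section mainaux
variable {d : ℕ}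

lemma conj_entry (V A : Matrix (Fin d) (Fin d) ℂ) (i : Fin d) :
    (star V * A * V) i i = star (fun k => V k i) ⬝ᵥ (A *ᵥ (fun k => V k i)) := by
  simp only [Matrix.mul_apply, Matrix.mulVec, dotProduct, Pi.star_apply, Matrix.star_apply,
    Finset.sum_mul, Finset.mul_sum]
  rw [Finset.sum_comm]
  refine Finset.sum_congr rfl fun k _ => Finset.sum_congr rfl fun l _ => by ring

end mainaux

/-- `‖pρ − qσ‖₁² ≤ 1 − 4pq + 4pq·d_B²(ρ,σ)` with `d_B² = 2(1 − ‖√ρ√σ‖₁)`. -/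
theorem trace_norm_sq_le_bures {d : ℕ} (ρ σ : Matrix (Fin d) (Fin d) ℂ)
    (hρ : ρ.PosSemidef) (hσ : σ.PosSemidef) (hρ1 : ρ.trace = 1) (hσ1 : σ.trace = 1)
    (p : ℝ) (hp : p ∈ Set.Ioo (0 : ℝ) 1) :
    (traceNorm ((p : ℂ) • ρ - ((1 - p : ℝ) : ℂ) • σ)) ^ 2 ≤
      1 - 4 * p * (1 - p) +
        4 * p * (1 - p) * (2 * (1 - traceNorm (hρ.sqrt * hσ.sqrt))) := by
  obtain ⟨hp0, hp1⟩ := hp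
  have hq0 : (0:ℝ) < 1 - p := by linarith
  set M := (p : ℂ) • ρ - ((1 - p : ℝ) : ℂ) • σ with hMdef
  have hM : M.IsHermitian := by
    show Mᴴ = M
    rw [hMdef, conjTranspose_sub, conjTranspose_smul, conjTranspose_smul, hρ.1.eq, hσ.1.eq]
    simp [Complex.star_def, Complex.conj_ofReal]
  set μ : Fin d → ℝ := hM.eigenvalues with hμdef
  set v : Fin d → Fin d → ℂ := fun i => ⇑(hM.eigenvectorBasis i) with hvdef
  have hMv : ∀ i, M *ᵥ v i = μ i • v i := fun i => hM.mulVec_eigenvectorBasis i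
  have hON := hM.eigenvectorBasis.orthonormal
  rw [orthonormal_iff_ite] at hON
  have hvv : ∀ i j, star (v i) ⬝ᵥ v j = if i = j then 1 else 0 := by
    intro i j
    rw [← hON i j]
    simp [hvdef, PiLp.inner_apply, dotProduct, mul_comm]
  set r : Fin d → ℝ := fun i => (star (v i) ⬝ᵥ (ρ *ᵥ v i)).re with hrdef
  set s : Fin d → ℝ := fun i => (star (v i) ⬝ᵥ (σ *ᵥ v i)).re with hsdef
  have hr0 : ∀ i, 0 ≤ r i := fun i => hρ.re_dotProduct_nonneg (v i)
  have hs0 : ∀ i, 0 ≤ s i := fun i => hσ.re_dotProduct_nonneg (v i)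
  have hμrs : ∀ i, μ i = p * r i - (1 - p) * s i := by
    intro i
    have h1 : star (v i) ⬝ᵥ (M *ᵥ v i) = (μ i : ℂ) := by
      rw [hMv i, dotProduct_smul, hvv i i, if_pos rfl]
      rw [Complex.real_smul, mul_one]
    have h2 : star (v i) ⬝ᵥ (M *ᵥ v i) = (p:ℂ) * (star (v i) ⬝ᵥ (ρ *ᵥ v i))
        - ((1-p : ℝ):ℂ) * (star (v i) ⬝ᵥ (σ *ᵥ v i)) := by
      rw [hMdef, Matrix.sub_mulVec, Matrix.smul_mulVec, Matrix.smul_mulVec,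
        dotProduct_sub, dotProduct_smul, dotProduct_smul, smul_eq_mul, smul_eq_mul]
    have h3 := congrArg Complex.re (h1.symm.trans h2)
    simp only [Complex.ofReal_re, Complex.sub_re, Complex.mul_re, Complex.ofReal_im] at h3
    rw [h3, hrdef, hsdef]
    ring
  -- sums
  set V : Matrix (Fin d) (Fin d) ℂ := (IsHermitian.eigenvectorUnitary hM : Matrix (Fin d) (Fin d) ℂ)
    with hVdef
  have hVV : V * star V = 1 := (Matrix.mem_unitaryGroup_iff).mp (IsHermitian.eigenvectorUnitary hM).2
  have hcol : ∀ i, (fun k => V k i) = v i := by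
    intro i
    funext k
    rw [hVdef, hvdef]
    exact IsHermitian.eigenvectorUnitary_apply hM k i
  have htrconj : ∀ (T : Matrix (Fin d) (Fin d) ℂ),
      (∑ i, star (v i) ⬝ᵥ (T *ᵥ v i)) = T.trace := by
    intro T
    have : ∀ i, star (v i) ⬝ᵥ (T *ᵥ v i) = (star V * T * V) i i := by
      intro i; rw [conj_entry V T i, hcol i]
    rw [Finset.sum_congr rfl fun i _ => this i]
    show (star V * T * V).trace = T.trace
    rw [Matrix.trace_mul_cycle, hVV, Matrix.one_mul]
  have hrsum : ∑ i, r i = 1 := by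
    have := congrArg Complex.re (htrconj ρ)
    rw [Complex.re_sum] at this
    rw [hrdef]
    simp only at this ⊢
    rw [this, hρ1, Complex.one_re]
  have hssum : ∑ i, s i = 1 := by
    have := congrArg Complex.re (htrconj σ)
    rw [Complex.re_sum] at this
    rw [hsdef]
    simp only at this ⊢
    rw [this, hσ1, Complex.one_re]
  -- Part 4 : trace norm of sqrt rho * sqrt sigma
  set A : Matrix (Fin d) (Fin d) ℂ := hρ.sqrt with hAdef
  set B : Matrix (Fin d) (Fin d) ℂ := hσ.sqrt with hBdef
  have hA : A.PosSemidef := hρ.posSemidef_sqrt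
  have hB : B.PosSemidef := hσ.posSemidef_sqrt
  set X : Matrix (Fin d) (Fin d) ℂ := A * B with hXdef
  have hXX : Xᴴ * X = B * ρ * B := by
    rw [hXdef, conjTranspose_mul, hA.1.eq, hB.1.eq]
    calc B * A * (A * B) = B * (A * A) * B := by simp only [Matrix.mul_assoc]
      _ = B * ρ * B := by rw [hρ.sqrt_mul_self]
  set N : Matrix (Fin d) (Fin d) ℂ := (posSemidef_conjTranspose_mul_self X).sqrt with hNdef
  have hN : N.PosSemidef := (posSemidef_conjTranspose_mul_self X).posSemidef_sqrt
  have hNN : N * N = Xᴴ * X := (posSemidef_conjTranspose_mul_self X).sqrt_mul_self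
  set ν : Fin d → ℝ := hN.1.eigenvalues with hνdef
  set w : Fin d → Fin d → ℂ := fun j => ⇑(hN.1.eigenvectorBasis j) with hwdef
  have hNw : ∀ j, N *ᵥ w j = ν j • w j := fun j => hN.1.mulVec_eigenvectorBasis j
  have hν0 : ∀ j, 0 ≤ ν j := hN.eigenvalues_nonneg
  have hONw := hN.1.eigenvectorBasis.orthonormal
  rw [orthonormal_iff_ite] at hONw
  have hww : ∀ i j, star (w i) ⬝ᵥ w j = if i = j then 1 else 0 := by
    intro i j
    rw [← hONw i j]
    simp [hwdef, PiLp.inner_apply, dotProduct, mul_comm]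
  have ht : traceNorm X = ∑ j, ν j := by
    show ((posSemidef_conjTranspose_mul_self X).sqrt).trace.re = _
    rw [show (posSemidef_conjTranspose_mul_self X).sqrt = N from rfl]
    rw [trace_herm_eq_sum_eig hN.1, Complex.re_sum]
    norm_num
    rfl
  have hXwXw : ∀ j k, star (X *ᵥ w j) ⬝ᵥ (X *ᵥ w k)
      = if j = k then ((ν j ^ 2 : ℝ) : ℂ) else 0 := by
    intro j k
    rw [star_mulVec, ← dotProduct_mulVec, Matrix.mulVec_mulVec, ← hNN,
      ← Matrix.mulVec_mulVec, hNw k, Matrix.mulVec_smul, hNw k,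
      dotProduct_smul, dotProduct_smul, hww j k]
    by_cases hjk : j = k
    · subst hjk
      simp [Complex.real_smul]
      push_cast
      ring
    · simp [hjk]
  set Jf : Finset (Fin d) := Finset.univ.filter (fun j => 0 < ν j) with hJfdef
  set z : Fin d → Fin d → ℂ := fun j => (ν j)⁻¹ • (X *ᵥ w j) with hzdef
  have hzz : ∀ j ∈ Jf, ∀ k ∈ Jf, star (z j) ⬝ᵥ z k = if j = k then 1 else 0 := by
    intro j hj k hk
    rw [Finset.mem_filter] at hj hk
    rw [hzdef]
    simp only
    rw [star_smul, star_trivial, smul_dotProduct, dotProduct_smul, hXwXw j k]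
    by_cases hjk : j = k
    · subst hjk
      rw [if_pos rfl, if_pos rfl, Complex.real_smul, Complex.real_smul]
      have hne : (ν j : ℂ) ≠ 0 := Complex.ofReal_ne_zero.mpr (ne_of_gt hj.2)
      push_cast
      field_simp
    · simp [hjk]
  have hc : ∀ i j, star (v i) ⬝ᵥ (B *ᵥ w j) = starRingEnd ℂ (star (w j) ⬝ᵥ (B *ᵥ v i)) := by
    intro i j
    have h1 : star (B *ᵥ v i) ⬝ᵥ w j = starRingEnd ℂ (star (w j) ⬝ᵥ (B *ᵥ v i)) := by
      rw [Matrix.star_dotProduct]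
      rfl
    rw [← h1, star_mulVec, ← dotProduct_mulVec, hB.1.eq]
  have hXw : ∀ j, X *ᵥ w j = ∑ i, (star (v i) ⬝ᵥ (B *ᵥ w j)) • (A *ᵥ v i) := by
    intro j
    have hexp := unitary_expand V hVV (B *ᵥ w j)
    simp only [hcol] at hexp
    have hexp' : (∑ i, ((star (v i)) ⬝ᵥ (B *ᵥ w j)) • v i) = B *ᵥ w j := hexp
    calc X *ᵥ w j = A *ᵥ (B *ᵥ w j) := by rw [Matrix.mulVec_mulVec]
      _ = A *ᵥ (∑ i, ((star (v i)) ⬝ᵥ (B *ᵥ w j)) • v i) := by rw [hexp']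
      _ = ∑ i, (star (v i) ⬝ᵥ (B *ᵥ w j)) • (A *ᵥ v i) := by
          rw [mulVec_sum']
          exact Finset.sum_congr rfl fun i _ => by rw [Matrix.mulVec_smul]
  have hν_eq : ∀ j ∈ Jf, (ν j : ℂ)
      = ∑ i, (star (v i) ⬝ᵥ (B *ᵥ w j)) * (star (z j) ⬝ᵥ (A *ᵥ v i)) := by
    intro j hj
    rw [Finset.mem_filter] at hj
    have h1 : star (z j) ⬝ᵥ (X *ᵥ w j) = (ν j : ℂ) := by
      rw [hzdef]
      simp only
      rw [star_smul, star_trivial, smul_dotProduct, hXwXw j j, if_pos rfl,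
        Complex.real_smul]
      have hne : (ν j : ℂ) ≠ 0 := Complex.ofReal_ne_zero.mpr (ne_of_gt hj.2)
      push_cast
      field_simp
    rw [← h1]
    conv_lhs => rw [hXw j]
    rw [dot_sum]
    exact Finset.sum_congr rfl fun i _ => by
      rw [dotProduct_smul, smul_eq_mul]
  have hbesselA : ∀ i, ∑ j ∈ Jf, ‖star (z j) ⬝ᵥ (A *ᵥ v i)‖ ^ 2 ≤ r i := by
    intro i
    refine (bessel_dot Jf z hzz (A *ᵥ v i)).trans (le_of_eq ?_)
    rw [star_mulVec, ← dotProduct_mulVec, Matrix.mulVec_mulVec, hA.1.eq, hρ.sqrt_mul_self]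
  have hbesselB : ∀ i, ∑ j ∈ Jf, ‖star (w j) ⬝ᵥ (B *ᵥ v i)‖ ^ 2 ≤ s i := by
    intro i
    refine (bessel_dot Jf w (fun j _ k _ => hww j k) (B *ᵥ v i)).trans (le_of_eq ?_)
    rw [star_mulVec, ← dotProduct_mulVec, Matrix.mulVec_mulVec, hB.1.eq, hσ.sqrt_mul_self]
  have hG : traceNorm X ≤ ∑ i, Real.sqrt (r i * s i) := by
    rw [ht]
    have h0 : ∑ j, ν j = ∑ j ∈ Jf, ν j := by
      symm
      apply Finset.sum_subset (Finset.subset_univ _)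
      intro x _ hx
      rw [hJfdef, Finset.mem_filter] at hx
      push_neg at hx
      exact le_antisymm (hx (Finset.mem_univ x)) (hν0 x)
    rw [h0]
    have h1 : ∀ j ∈ Jf, ν j ≤
        ∑ i, ‖star (v i) ⬝ᵥ (B *ᵥ w j)‖ * ‖star (z j) ⬝ᵥ (A *ᵥ v i)‖ := by
      intro j hj
      have h2 := congrArg Complex.re (hν_eq j hj)
      rw [Complex.ofReal_re] at h2
      calc ν j = (∑ i, (star (v i) ⬝ᵥ (B *ᵥ w j)) * (star (z j) ⬝ᵥ (A *ᵥ v i))).re := h2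
        _ ≤ ‖∑ i, (star (v i) ⬝ᵥ (B *ᵥ w j)) * (star (z j) ⬝ᵥ (A *ᵥ v i))‖ :=
            Complex.re_le_norm _
        _ ≤ ∑ i, ‖(star (v i) ⬝ᵥ (B *ᵥ w j)) * (star (z j) ⬝ᵥ (A *ᵥ v i))‖ :=
            norm_sum_le _ _
        _ = ∑ i, ‖star (v i) ⬝ᵥ (B *ᵥ w j)‖ * ‖star (z j) ⬝ᵥ (A *ᵥ v i)‖ := by
            exact Finset.sum_congr rfl fun i _ => norm_mul _ _
    calc ∑ j ∈ Jf, ν j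
        ≤ ∑ j ∈ Jf, ∑ i, ‖star (v i) ⬝ᵥ (B *ᵥ w j)‖ * ‖star (z j) ⬝ᵥ (A *ᵥ v i)‖ :=
          Finset.sum_le_sum h1
      _ = ∑ i, ∑ j ∈ Jf, ‖star (v i) ⬝ᵥ (B *ᵥ w j)‖ * ‖star (z j) ⬝ᵥ (A *ᵥ v i)‖ :=
          Finset.sum_comm
      _ ≤ ∑ i, Real.sqrt (r i * s i) := by
          refine Finset.sum_le_sum fun i _ => ?_
          have hcs := Real.sum_mul_le_sqrt_mul_sqrt Jf
            (fun j => ‖star (v i) ⬝ᵥ (B *ᵥ w j)‖) (fun j => ‖star (z j) ⬝ᵥ (A *ᵥ v i)‖)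
          refine hcs.trans ?_
          have h2B : ∑ j ∈ Jf, ‖star (v i) ⬝ᵥ (B *ᵥ w j)‖ ^ 2 ≤ s i := by
            refine le_trans (le_of_eq ?_) (hbesselB i)
            refine Finset.sum_congr rfl fun j _ => ?_
            rw [hc i j, RCLike.norm_conj]
          have h2A := hbesselA i
          calc Real.sqrt (∑ j ∈ Jf, ‖star (v i) ⬝ᵥ (B *ᵥ w j)‖ ^ 2) *
                Real.sqrt (∑ j ∈ Jf, ‖star (z j) ⬝ᵥ (A *ᵥ v i)‖ ^ 2)
              ≤ Real.sqrt (s i) * Real.sqrt (r i) :=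
                mul_le_mul (Real.sqrt_le_sqrt h2B) (Real.sqrt_le_sqrt h2A)
                  (Real.sqrt_nonneg _) (Real.sqrt_nonneg _)
            _ = Real.sqrt (r i * s i) := by
                rw [Real.sqrt_mul (hr0 i), mul_comm]
  have hLeq : traceNorm M = ∑ i, |p * r i - (1 - p) * s i| := by
    rw [traceNorm_hermitian hM]
    exact Finset.sum_congr rfl fun i _ => by rw [← hμrs i]
  have hscalar := scalar_cs p (1 - p) hp0 hq0 (by ring) r s hr0 hs0 hrsum hssum
  have hgoal : traceNorm M ^ 2 ≤ 1 - 4 * p * (1 - p) +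
      4 * p * (1 - p) * (2 * (1 - traceNorm X)) := by
    rw [hLeq]
    set G := ∑ i, Real.sqrt (r i * s i) with hGdef
    set t := traceNorm X with htdef
    have key1 : 0 ≤ 4 * p * (1 - p) * (G - 1) ^ 2 := by positivity
    have key2 : 0 ≤ 8 * (p * ((1 - p) * (G - t))) :=
      mul_nonneg (by norm_num) (mul_nonneg hp0.le (mul_nonneg hq0.le (by linarith [hG])))
    nlinarith [hscalar, key1, key2]
  exact hgoal
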